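/- arXiv:2011.00888 — 2 statements merged into one kernel-verified Lean document; each statement's English description precedes it below -/
import Mathlib

section
/- Let ε > 0 and τ ∈ (0,1). Suppose H_ε, H_{2ε}, H_{3ε} are differentiable at the points where they are evaluated below, satisfy their defining relations U(H_μ(x)) = U(x) + μ in neighborhoods of those points, and all reception events involved are sub-threshold (i.e. the points τ, H_ε(τ), H_{2ε}(τ), τ + H_{3ε}(τ) and their images lie in [0,1]). Then the first nonzero eigenvalue of the Jacobian of the return map of the S₄×S₁ cluster periodic orbit, λ₁ = (−1 + (1 + H_ε'(τ)·H_ε'(H_ε(τ)))·H_ε'(H_{2ε}(τ)))·H_ε'(τ + H_{3ε}(τ)), is strictly greater than 1. -/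
/-- Lemma 1: at a sub-threshold reception point, the derivative of the pulse-response
map is strictly greater than 1. -/
lemma deriv_H_gt_one (U H : ℝ → ℝ) (μ x : ℝ)
    (hU : ContDiff ℝ 2 U)
    (hU' : ∀ y ∈ Set.Icc (0:ℝ) 1, 0 < deriv U y)
    (hU'' : ∀ y ∈ Set.Icc (0:ℝ) 1, deriv (deriv U) y < 0)
    (hμ : 0 < μ)
    (hx : x ∈ Set.Icc (0:ℝ) 1) (hHx : H x ∈ Set.Icc (0:ℝ) 1)
    (hrel : ∀ᶠ y in nhds x, U (H y) = U y + μ)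
    (hd : DifferentiableAt ℝ H x) :
    1 < deriv H x := by
  have hUdiff : Differentiable ℝ U := hU.differentiable (by norm_num)
  -- U is strictly increasing on [0,1]
  have hmono : StrictMonoOn U (Set.Icc (0:ℝ) 1) := by
    apply strictMonoOn_of_deriv_pos (convex_Icc 0 1) hUdiff.continuous.continuousOn
    intro y hy
    exact hU' y (interior_subset hy)
  -- deriv U is strictly decreasing on [0,1]
  have hanti : StrictAntiOn (deriv U) (Set.Icc (0:ℝ) 1) := by
    apply strictAntiOn_of_deriv_neg (convex_Icc 0 1)
      ((hU.continuous_deriv (by norm_num)).continuousOn)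
    intro y hy
    exact hU'' y (interior_subset hy)
  -- x < H x
  have hlt : x < H x := by
    have h1 : U x < U (H x) := by
      have := hrel.self_of_nhds
      rw [this]; linarith
    by_contra h
    push_neg at h
    rcases eq_or_lt_of_le h with h | h
    · rw [h] at h1; exact lt_irrefl _ h1
    · exact absurd h1 (not_lt.mpr (hmono hHx hx h).le)
  -- differentiate the relation
  have hderiv : deriv (fun y => U (H y)) x = deriv (fun y => U y + μ) x :=
    Filter.EventuallyEq.deriv_eq hrel
  have hchain : deriv U (H x) * deriv H x = deriv U x := by
    have h1 : deriv (fun y => U (H y)) x = deriv U (H x) * deriv H x :=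
      deriv_comp (x := x) (hUdiff.differentiableAt) hd
    have h2 : deriv (fun y => U y + μ) x = deriv U x := by
      simp [deriv_add_const]
    rw [h1, h2] at hderiv
    exact hderiv
  have hUx : 0 < deriv U x := hU' x hx
  have hUHx : 0 < deriv U (H x) := hU' (H x) hHx
  have hdec : deriv U (H x) < deriv U x := hanti hx hHx hlt
  rw [← hchain] at hdec
  nlinarith

/-- The first nonzero eigenvalue of the Jacobian of the return map of the `S₄ × S₁` cluster
periodic orbit, `λ₁ = (-1 + (1 + Hε'(τ) Hε'(Hε(τ))) Hε'(H2ε(τ))) Hε'(τ + H3ε(τ))`,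
is strictly greater than 1. -/
theorem s4s1_eigenvalue_one_gt_one
    (U Hε H2ε H3ε : ℝ → ℝ) (ε τ : ℝ)
    (hU : ContDiff ℝ 2 U) (hU0 : U 0 = 0) (hU1 : U 1 = 1)
    (hU' : ∀ x ∈ Set.Icc (0:ℝ) 1, 0 < deriv U x)
    (hU'' : ∀ x ∈ Set.Icc (0:ℝ) 1, deriv (deriv U) x < 0)
    (hε : 0 < ε) (hτ : τ ∈ Set.Ioo (0:ℝ) 1)
    -- defining relations in neighborhoods of the evaluation points
    (hrel1 : ∀ᶠ x in nhds τ, U (Hε x) = U x + ε)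
    (hrel2 : ∀ᶠ x in nhds (Hε τ), U (Hε x) = U x + ε)
    (hrel3 : ∀ᶠ x in nhds (H2ε τ), U (Hε x) = U x + ε)
    (hrel4 : ∀ᶠ x in nhds (τ + H3ε τ), U (Hε x) = U x + ε)
    (hrel5 : ∀ᶠ x in nhds τ, U (H2ε x) = U x + 2 * ε)
    (hrel6 : ∀ᶠ x in nhds τ, U (H3ε x) = U x + 3 * ε)
    -- all reception events are sub-threshold: points and images lie in [0,1]
    (hm1 : Hε τ ∈ Set.Icc (0:ℝ) 1)
    (hm2 : H2ε τ ∈ Set.Icc (0:ℝ) 1)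
    (hm3 : H3ε τ ∈ Set.Icc (0:ℝ) 1)
    (hm4 : Hε (Hε τ) ∈ Set.Icc (0:ℝ) 1)
    (hm5 : Hε (H2ε τ) ∈ Set.Icc (0:ℝ) 1)
    (hm6 : τ + H3ε τ ∈ Set.Icc (0:ℝ) 1)
    (hm7 : Hε (τ + H3ε τ) ∈ Set.Icc (0:ℝ) 1)
    -- differentiability at the evaluation points
    (hd1 : DifferentiableAt ℝ Hε τ)
    (hd2 : DifferentiableAt ℝ Hε (Hε τ))
    (hd3 : DifferentiableAt ℝ Hε (H2ε τ))
    (hd4 : DifferentiableAt ℝ Hε (τ + H3ε τ)) :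
    1 < (-1 + (1 + deriv Hε τ * deriv Hε (Hε τ)) * deriv Hε (H2ε τ)) *
        deriv Hε (τ + H3ε τ) := by
  have hτIcc : τ ∈ Set.Icc (0:ℝ) 1 := ⟨hτ.1.le, hτ.2.le⟩
  have ha := deriv_H_gt_one U Hε ε τ hU hU' hU'' hε hτIcc hm1 hrel1 hd1
  have hb := deriv_H_gt_one U Hε ε (Hε τ) hU hU' hU'' hε hm1 hm4 hrel2 hd2
  have hc := deriv_H_gt_one U Hε ε (H2ε τ) hU hU' hU'' hε hm2 hm5 hrel3 hd3
  have hd := deriv_H_gt_one U Hε ε (τ + H3ε τ) hU hU' hU'' hε hm6 hm7 hrel4 hd4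
  set a := deriv Hε τ
  set b := deriv Hε (Hε τ)
  set c := deriv Hε (H2ε τ)
  set d := deriv Hε (τ + H3ε τ)
  have hab : 1 < a * b := by nlinarith
  have h2 : 2 < (1 + a * b) * c := by nlinarith
  have h3 : 1 < -1 + (1 + a * b) * c := by linarith
  nlinarith
end

section
/- Let ε > 0 and τ ∈ (0,1). Suppose H_ε, H_{2ε}, H_{3ε} are differentiable at the points where they are evaluated below, satisfy their defining relations U(H_μ(x)) = U(x) + μ in neighborhoods of those points, and all reception events involved are sub-threshold (i.e. the points τ, H_ε(τ), H_{2ε}(τ), τ + H_{3ε}(τ) and their images lie in [0,1]). Then the third nonzero eigenvalue of the Jacobian of the return map of the S₄×S₁ cluster periodic orbit, λ₃ = (−1 + 2·H_ε'(τ))·H_ε'(H_ε(τ))·H_ε'(H_{2ε}(τ))·H_ε'(τ + H_{3ε}(τ)), is strictly greater than 1. -/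
lemma pulse_deriv_gt_one (U Hε : ℝ → ℝ) (ε : ℝ) (hε : 0 < ε)
    (hU : ContDiff ℝ 2 U)
    (hU' : ∀ x ∈ Set.Icc (0:ℝ) 1, 0 < deriv U x)
    (hU'' : ∀ x ∈ Set.Icc (0:ℝ) 1, deriv (deriv U) x < 0)
    (x : ℝ) (hx : x ∈ Set.Icc (0:ℝ) 1) (hHx : Hε x ∈ Set.Icc (0:ℝ) 1)
    (hrel : ∀ᶠ y in nhds x, U (Hε y) = U y + ε)
    (hd : DifferentiableAt ℝ Hε x) : 1 < deriv Hε x := by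
  have hUd : Differentiable ℝ U := hU.differentiable (by norm_num)
  have hU'c : Continuous (deriv U) := hU.continuous_deriv one_le_two
  have mono : StrictMonoOn U (Set.Icc 0 1) :=
    strictMonoOn_of_deriv_pos (convex_Icc 0 1) hU.continuous.continuousOn
      (fun y hy => hU' y (interior_subset hy))
  have anti : StrictAntiOn (deriv U) (Set.Icc 0 1) :=
    strictAntiOn_of_deriv_neg (convex_Icc 0 1) hU'c.continuousOn
      (fun y hy => hU'' y (interior_subset hy))
  have hval : U (Hε x) = U x + ε := hrel.self_of_nhds
  have hgt : x < Hε x := by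
    by_contra h
    push_neg at h
    have := mono.monotoneOn hHx hx h
    linarith
  have hder : deriv U (Hε x) * deriv Hε x = deriv U x := by
    have h1 : deriv (fun y => U (Hε y)) x = deriv (fun y => U y + ε) x :=
      Filter.EventuallyEq.deriv_eq hrel
    rw [deriv_add_const] at h1
    rw [show (fun y => U (Hε y)) = U ∘ Hε from rfl, deriv_comp x (hUd (Hε x)) hd] at h1
    exact h1
  have hlt : deriv U (Hε x) < deriv U x := anti hx hHx hgt
  have hpos : 0 < deriv U (Hε x) := hU' _ hHx
  nlinarith

/-- The third nonzero eigenvalue of the Jacobian of the return map of the `S₄ × S₁` cluster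
periodic orbit, `λ₃ = (-1 + 2 Hε'(τ)) Hε'(Hε(τ)) Hε'(H2ε(τ)) Hε'(τ + H3ε(τ))`,
is strictly greater than 1. -/
theorem s4s1_eigenvalue_three_gt_one
    (U Hε H2ε H3ε : ℝ → ℝ) (ε τ : ℝ)
    (hU : ContDiff ℝ 2 U) (hU0 : U 0 = 0) (hU1 : U 1 = 1)
    (hU' : ∀ x ∈ Set.Icc (0:ℝ) 1, 0 < deriv U x)
    (hU'' : ∀ x ∈ Set.Icc (0:ℝ) 1, deriv (deriv U) x < 0)
    (hε : 0 < ε) (hτ : τ ∈ Set.Ioo (0:ℝ) 1)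
    -- defining relations in neighborhoods of the evaluation points
    (hrel1 : ∀ᶠ x in nhds τ, U (Hε x) = U x + ε)
    (hrel2 : ∀ᶠ x in nhds (Hε τ), U (Hε x) = U x + ε)
    (hrel3 : ∀ᶠ x in nhds (H2ε τ), U (Hε x) = U x + ε)
    (hrel4 : ∀ᶠ x in nhds (τ + H3ε τ), U (Hε x) = U x + ε)
    (hrel5 : ∀ᶠ x in nhds τ, U (H2ε x) = U x + 2 * ε)
    (hrel6 : ∀ᶠ x in nhds τ, U (H3ε x) = U x + 3 * ε)
    -- all reception events are sub-threshold: points and images lie in [0,1]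
    (hm1 : Hε τ ∈ Set.Icc (0:ℝ) 1)
    (hm2 : H2ε τ ∈ Set.Icc (0:ℝ) 1)
    (hm3 : H3ε τ ∈ Set.Icc (0:ℝ) 1)
    (hm4 : Hε (Hε τ) ∈ Set.Icc (0:ℝ) 1)
    (hm5 : Hε (H2ε τ) ∈ Set.Icc (0:ℝ) 1)
    (hm6 : τ + H3ε τ ∈ Set.Icc (0:ℝ) 1)
    (hm7 : Hε (τ + H3ε τ) ∈ Set.Icc (0:ℝ) 1)
    -- differentiability at the evaluation points
    (hd1 : DifferentiableAt ℝ Hε τ)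
    (hd2 : DifferentiableAt ℝ Hε (Hε τ))
    (hd3 : DifferentiableAt ℝ Hε (H2ε τ))
    (hd4 : DifferentiableAt ℝ Hε (τ + H3ε τ)) :
    1 < (-1 + 2 * deriv Hε τ) * deriv Hε (Hε τ) * deriv Hε (H2ε τ) *
        deriv Hε (τ + H3ε τ) := by
  have hτ' : τ ∈ Set.Icc (0:ℝ) 1 := Set.mem_Icc.mpr ⟨hτ.1.le, hτ.2.le⟩
  have a1 : 1 < deriv Hε τ :=
    pulse_deriv_gt_one U Hε ε hε hU hU' hU'' τ hτ' hm1 hrel1 hd1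
  have a2 : 1 < deriv Hε (Hε τ) :=
    pulse_deriv_gt_one U Hε ε hε hU hU' hU'' (Hε τ) hm1 hm4 hrel2 hd2
  have a3 : 1 < deriv Hε (H2ε τ) :=
    pulse_deriv_gt_one U Hε ε hε hU hU' hU'' (H2ε τ) hm2 hm5 hrel3 hd3
  have a4 : 1 < deriv Hε (τ + H3ε τ) :=
    pulse_deriv_gt_one U Hε ε hε hU hU' hU'' (τ + H3ε τ) hm6 hm7 hrel4 hd4
  have p1 : 1 < -1 + 2 * deriv Hε τ := by linarith
  have p2 : 1 < (-1 + 2 * deriv Hε τ) * deriv Hε (Hε τ) := by nlinarith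
  have p3 : 1 < (-1 + 2 * deriv Hε τ) * deriv Hε (Hε τ) * deriv Hε (H2ε τ) := by nlinarith
  nlinarith
end
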